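/- There is no assignment τ ↦ ρ_τ of arithmetic sentences to arithmetic sentences satisfying all three of: (Independence) if PA+τ is consistent then so are PA+τ+ρ_τ and PA+τ+¬ρ_τ; (Extensionality) if PA proves τ ↔ σ then PA proves ρ_τ ↔ ρ_σ; (Monotonicity) if PA proves τ → σ then PA proves ρ_τ → ρ_σ. In fact, independence plus monotonicity alone already yield a contradiction, assuming PA is consistent. -/
import Mathlib


open FirstOrder Language

/-- **No monotone independent sentence operator.**
There is no assignment `τ ↦ ρ τ` of arithmetic sentences to arithmetic sentences satisfying
both Independence (if `PA + τ` is consistent then so are `PA + τ + ρ τ` and `PA + τ + ¬ρ τ`)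
and Monotonicity (if `PA ⊢ τ → σ` then `PA ⊢ ρ τ → ρ σ`); in particular there is none
additionally satisfying Extensionality.  Consistency is rendered, via the completeness
theorem, as satisfiability, and provability as semantic consequence `⊨ᵇ`. -/
theorem no_independent_monotone_operator
    {L : FirstOrder.Language} (PA : L.Theory) (hPA : PA.IsSatisfiable) :
    ¬ ∃ ρ : L.Sentence → L.Sentence,
      (∀ τ : L.Sentence, (PA ∪ {τ}).IsSatisfiable →
        (PA ∪ {τ, ρ τ}).IsSatisfiable ∧ (PA ∪ {τ, ∼(ρ τ)}).IsSatisfiable) ∧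
      (∀ τ σ : L.Sentence, (PA ⊨ᵇ (τ ⟹ σ)) → (PA ⊨ᵇ (ρ τ ⟹ ρ σ))) := by
  rintro ⟨ρ, hind, hmono⟩
  -- Step 1: PA ∪ {⊤} is satisfiable.
  have h1 : (PA ∪ {(⊤ : L.Sentence)}).IsSatisfiable := by
    obtain ⟨M⟩ := hPA
    haveI : (PA ∪ {(⊤ : L.Sentence)}).Model M := by
      rw [Theory.model_union_iff]
      exact ⟨M.is_model, by simp [Theory.model_singleton_iff, Sentence.Realize]⟩
    exact Theory.Model.isSatisfiable M
  -- Step 2: PA ∪ {⊤, ∼ρ ⊤} is satisfiable, hence so is PA ∪ {∼ρ ⊤}.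
  obtain ⟨-, h2⟩ := hind ⊤ h1
  have h3 : (PA ∪ {∼(ρ (⊤ : L.Sentence))}).IsSatisfiable := by
    obtain ⟨M⟩ := h2
    have := M.is_model
    rw [Theory.model_union_iff, Theory.model_insert_iff, Theory.model_singleton_iff] at this
    haveI : (PA ∪ {∼(ρ (⊤ : L.Sentence))}).Model M := by
      rw [Theory.model_union_iff]
      rw [Theory.model_singleton_iff]
      exact ⟨this.1, this.2.2⟩
    exact Theory.Model.isSatisfiable M
  -- Step 3: independence at τ = ∼ρ ⊤ gives a model of PA ∪ {∼ρ ⊤, ρ (∼ρ ⊤)}.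
  obtain ⟨h4, -⟩ := hind (∼(ρ (⊤ : L.Sentence))) h3
  -- Step 4: monotonicity: PA ⊨ ρ (∼ρ ⊤) ⟹ ρ ⊤.
  have hm : PA ⊨ᵇ (ρ (∼(ρ (⊤ : L.Sentence))) ⟹ ρ (⊤ : L.Sentence)) := by
    apply hmono
    intro M v xs
    simp
  -- Contradiction in the model from step 3.
  obtain ⟨M⟩ := h4
  have hM := M.is_model
  rw [Theory.model_union_iff, Theory.model_insert_iff, Theory.model_singleton_iff] at hM
  obtain ⟨hMPA, hnot, hrho⟩ := hM
  have : M ⊨ (ρ (∼(ρ (⊤ : L.Sentence))) ⟹ ρ (⊤ : L.Sentence)) := by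
    haveI : PA.Model M := hMPA
    exact hm.realize_sentence M
  exact hnot (this hrho)
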